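/- Let T=(V,E) be a tree with diameter δ that is not a path graph, let c = c(T) ≥ 2, and let r ≠ t be two vertices of T. Then there exist subsets S₀, S₁, …, S_m of V (caterpillar sets) such that: each S_k induces a connected subtree of T; |S_k| = c+1 for every k < m and |S_m| ≤ c+1; r ∈ S₀ and t ∈ S_m; for every k < m, |S_k ∩ S_{k+1}| ≥ 2 and S_k ∩ S_{k+1} contains at least one junction of T; for every k < m, |S_k ∪ S_{k+1}| ≤ 2c; and m ≤ 2·δ/(c−1) + 1. -/
import Mathlib


namespace PMT

variable {V : Type}

/-- The degree of a vertex (number of neighbors). -/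
noncomputable def deg (G : SimpleGraph V) (v : V) : ℕ := (G.neighborSet v).ncard

/-- A corridor: a (nontrivial) path whose endpoints have degree different from 2 and
whose internal vertices all have degree exactly 2. -/
def IsCorridor (G : SimpleGraph V) {a b : V} (p : G.Walk a b) : Prop :=
  p.IsPath ∧ 1 ≤ p.length ∧ deg G a ≠ 2 ∧ deg G b ≠ 2 ∧
    ∀ x ∈ p.support, x ≠ a → x ≠ b → deg G x = 2

/-- `c₁(T)`: the maximum length of a corridor. -/
noncomputable def c1 (G : SimpleGraph V) : ℕ :=
  sSup {n | ∃ (a b : V) (p : G.Walk a b), IsCorridor G p ∧ p.length = n}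

/-- `c₂(T)`: the maximum length of a corridor both of whose endpoints are junctions
(vertices of degree greater than 2); `0` if no such corridor exists. -/
noncomputable def c2 (G : SimpleGraph V) : ℕ :=
  sSup {n | ∃ (a b : V) (p : G.Walk a b),
    IsCorridor G p ∧ 2 < deg G a ∧ 2 < deg G b ∧ p.length = n}

/-- A path graph: all vertices lie on a single path. -/
def IsPathGraph (G : SimpleGraph V) : Prop :=
  ∃ (a b : V) (p : G.Walk a b), p.IsPath ∧ ∀ x : V, x ∈ p.support

/- The constant `c(T)`: `c₁(T)` if `T` is a path graph,
`max (c₁(T)+1) (c₂(T)+2)` otherwise. -/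
open Classical in
noncomputable def cT (G : SimpleGraph V) : ℕ :=
  if IsPathGraph G then c1 G else max (c1 G + 1) (c2 G + 2)

end PMT

open SimpleGraph Walk

namespace CatAux

variable {V : Type} {G : SimpleGraph V}

lemma getVert_injOn' {u w : V} {p : G.Walk u w} (hp : p.IsPath) :
    ∀ i ≤ p.length, ∀ j ≤ p.length, p.getVert i = p.getVert j → i = j := by
  induction p with
  | nil => intro i hi j hj _; simp at hi hj; omega
  | cons h q ih =>
    intro i hi j hj hij
    rw [Walk.cons_isPath_iff] at hp
    match i, j with
    | 0, 0 => rfl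
    | 0, j+1 =>
      exfalso
      apply hp.2
      rw [Walk.getVert_zero] at hij
      rw [Walk.getVert_cons_succ] at hij
      exact Walk.mem_support_iff_exists_getVert.2 ⟨j, hij.symm, by simpa using hj⟩
    | i+1, 0 =>
      exfalso
      apply hp.2
      rw [Walk.getVert_zero] at hij
      rw [Walk.getVert_cons_succ] at hij
      exact Walk.mem_support_iff_exists_getVert.2 ⟨i, hij, by simpa using hi⟩
    | i+1, j+1 =>
      rw [Walk.getVert_cons_succ, Walk.getVert_cons_succ] at hij
      have := ih hp.1 i (by simpa using hi) j (by simpa using hj) hij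
      omega

/-- segment of a path from position i to position j -/
lemma seg {u w : V} {p : G.Walk u w} (hp : p.IsPath) :
    ∀ i j, i ≤ j → j ≤ p.length →
    ∃ q : G.Walk (p.getVert i) (p.getVert j), q.IsPath ∧ q.length = j - i ∧
      (∀ z ∈ q.support, ∃ k, i ≤ k ∧ k ≤ j ∧ z = p.getVert k) ∧
      (∀ k, i ≤ k → k ≤ j → p.getVert k ∈ q.support) := by
  intro i j hij hj
  obtain ⟨n, hn⟩ : ∃ n, j - i = n := ⟨j - i, rfl⟩
  induction n generalizing i with
  | zero =>
    have : i = j := by omega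
    subst this
    refine ⟨Walk.nil, by simp, by simp, ?_, fun k h1 h2 => by
      have : k = i := by omega
      simp [this]⟩
    intro z hz
    simp only [Walk.support_nil, List.mem_singleton] at hz
    exact ⟨i, le_rfl, le_rfl, hz⟩
  | succ n ihn =>
    obtain ⟨q, hq, hql, hqs, hqs2⟩ := ihn (i+1) (by omega) (by omega)
    have hadj : G.Adj (p.getVert i) (p.getVert (i+1)) :=
      p.adj_getVert_succ (by omega)
    have hni : p.getVert i ∉ q.support := by
      intro hmem
      obtain ⟨k, hk1, hk2, hk3⟩ := hqs _ hmem
      have := getVert_injOn' hp i (by omega) k (by omega) hk3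
      omega
    refine ⟨Walk.cons hadj q, Walk.IsPath.cons hq hni, by simp [hql]; omega, ?_, ?_⟩
    · intro z hz
      rw [Walk.support_cons, List.mem_cons] at hz
      rcases hz with rfl | hz
      · exact ⟨i, le_rfl, hij, rfl⟩
      · obtain ⟨k, h1, h2, h3⟩ := hqs z hz
        exact ⟨k, by omega, h2, h3⟩
    · intro k h1 h2
      rw [Walk.support_cons, List.mem_cons]
      rcases eq_or_lt_of_le h1 with rfl | h
      · left; rfl
      · right; exact hqs2 k (by omega) h2

/-- One-sided extension of a degree-2-internal path at a degree-2 start. -/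
lemma ext_step [DecidableEq V] (hT : G.IsAcyclic) {x y : V} (p : G.Walk x y) (hp : p.IsPath)
    (hlen : 1 ≤ p.length)
    (hint : ∀ z ∈ p.support, z ≠ x → z ≠ y → PMT.deg G z = 2)
    (hdx : PMT.deg G x = 2) :
    ∃ (w : V) (p' : G.Walk w y), p'.IsPath ∧ p'.length = p.length + 1 ∧
      (∀ z ∈ p'.support, z ≠ w → z ≠ y → PMT.deg G z = 2) ∧
      p'.support.length = p.support.length + 1 := by
  have h1 : G.Adj x (p.getVert 1) := by
    have := p.adj_getVert_succ (i := 0) (by omega)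
    rwa [p.getVert_zero] at this
  obtain ⟨a, b, hab, hset⟩ := Set.ncard_eq_two.mp hdx
  have hmem1 : p.getVert 1 ∈ ({a, b} : Set V) := hset ▸ h1
  obtain ⟨w, hw_adj, hw_ne⟩ : ∃ w, G.Adj x w ∧ w ≠ p.getVert 1 := by
    rcases hmem1 with h | h
    · exact ⟨b, by rw [← SimpleGraph.mem_neighborSet, hset]; simp,
        fun hc => hab (h.symm.trans hc.symm)⟩
    · simp only [Set.mem_singleton_iff] at h
      exact ⟨a, by rw [← SimpleGraph.mem_neighborSet, hset]; simp,
        fun hc => hab (hc.trans h)⟩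
  have hw_not : w ∉ p.support := by
    intro hmem
    have hq00 : p.takeUntil w hmem = Walk.cons hw_adj Walk.nil := by
      have := hT.path_unique ⟨p.takeUntil w hmem, hp.takeUntil hmem⟩
        ⟨Walk.cons hw_adj Walk.nil, by simp [Walk.cons_isPath_iff, hw_adj.ne]⟩
      exact congrArg Subtype.val this
    have hspec := p.take_spec hmem
    have : p.getVert 1 = w := by
      rw [← hspec, Walk.getVert_append, hq00]
      simp
    exact hw_ne this.symm
  refine ⟨w, Walk.cons hw_adj.symm p, hp.cons hw_not, by simp, ?_, by simp⟩
  intro z hz hzw hzy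
  rw [Walk.support_cons, List.mem_cons] at hz
  rcases hz with rfl | hz
  · exact absurd rfl hzw
  · by_cases hzx : z = x
    · exact hzx ▸ hdx
    · exact hint z hz hzx hzy

/-- Any nontrivial path with degree-2 internal vertices extends to a corridor. -/
lemma corridor_extend [Fintype V] [DecidableEq V] (hT : G.IsAcyclic) :
    ∀ (n : ℕ) (x y : V) (p : G.Walk x y), p.IsPath → 1 ≤ p.length →
    (∀ z ∈ p.support, z ≠ x → z ≠ y → PMT.deg G z = 2) →
    Fintype.card V ≤ p.support.length + n →
    ∃ (a b : V) (q : G.Walk a b), PMT.IsCorridor G q ∧ p.length ≤ q.length := by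
  intro n
  induction n with
  | zero =>
    intro x y p hp hlen hint hcard
    have hdx : PMT.deg G x ≠ 2 := by
      intro hdx
      obtain ⟨w, p', hp', _, _, hsl⟩ := ext_step hT p hp hlen hint hdx
      have := hp'.support_nodup.length_le_card
      omega
    have hdy : PMT.deg G y ≠ 2 := by
      intro hdy
      obtain ⟨w, p', hp', _, _, hsl⟩ := ext_step hT p.reverse hp.reverse
        (by simpa using hlen)
        (by intro z hz h1 h2; exact hint z (by simpa using hz) h2 h1) hdy
      have := hp'.support_nodup.length_le_card
      rw [Walk.support_reverse, List.length_reverse] at hsl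
      omega
    exact ⟨x, y, p, ⟨hp, hlen, hdx, hdy, hint⟩, le_rfl⟩
  | succ n ih =>
    intro x y p hp hlen hint hcard
    by_cases hdx : PMT.deg G x = 2
    · obtain ⟨w, p', hp', hlen', hint', hsl⟩ := ext_step hT p hp hlen hint hdx
      obtain ⟨a, b, q, hq, hlq⟩ := ih w y p' hp' (by omega) hint' (by omega)
      exact ⟨a, b, q, hq, by omega⟩
    · by_cases hdy : PMT.deg G y = 2
      · obtain ⟨w, p', hp', hlen', hint', hsl⟩ := ext_step hT p.reverse hp.reverse
          (by simpa using hlen)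
          (by intro z hz h1 h2; exact hint z (by simpa using hz) h2 h1) hdy
        rw [Walk.length_reverse] at hlen'
        rw [Walk.support_reverse, List.length_reverse] at hsl
        obtain ⟨a, b, q, hq, hlq⟩ := ih w x p' hp' (by omega) hint' (by omega)
        exact ⟨a, b, q, hq, by omega⟩
      · exact ⟨x, y, p, ⟨hp, hlen, hdx, hdy, hint⟩, le_rfl⟩

end CatAux

/-- existence of caterpillar sets. -/
theorem caterpillar_sets {V : Type} [Fintype V] [DecidableEq V]
    (G : SimpleGraph V) (hT : G.IsTree) (hnp : ¬ PMT.IsPathGraph G)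
    (hc : 2 ≤ PMT.cT G) (r t : V) (hrt : r ≠ t) :
    ∃ (m : ℕ) (S : ℕ → Finset V),
      (∀ k ≤ m, (G.induce (↑(S k) : Set V)).Connected) ∧
      (∀ k < m, (S k).card = PMT.cT G + 1) ∧
      (S m).card ≤ PMT.cT G + 1 ∧
      r ∈ S 0 ∧ t ∈ S m ∧
      (∀ k < m, 2 ≤ (S k ∩ S (k + 1)).card) ∧
      (∀ k < m, ∃ j ∈ S k ∩ S (k + 1), 2 < PMT.deg G j) ∧
      (∀ k < m, (S k ∪ S (k + 1)).card ≤ 2 * PMT.cT G) ∧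
      (m : ℝ) ≤ 2 * (G.diam : ℝ) / ((PMT.cT G : ℝ) - 1) + 1 := by
  classical
  set c := PMT.cT G with hcdef
  have hconn := hT.isConnected
  -- basic corridor bounds
  have hcT : c = max (PMT.c1 G + 1) (PMT.c2 G + 2) := by
    rw [hcdef, PMT.cT, if_neg hnp]
  have hcorr1 : ∀ {a b : V} (q : G.Walk a b), PMT.IsCorridor G q →
      q.length ≤ PMT.c1 G := by
    intro a b q hq
    apply le_csSup
    · exact ⟨Fintype.card V, fun n hn => by
        obtain ⟨a', b', q', hq', rfl⟩ := hn
        exact (hq'.1.length_lt).le⟩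
    · exact ⟨a, b, q, hq, rfl⟩
  have hcorr2 : ∀ {a b : V} (q : G.Walk a b), PMT.IsCorridor G q →
      2 < PMT.deg G a → 2 < PMT.deg G b → q.length ≤ PMT.c2 G := by
    intro a b q hq ha hb
    apply le_csSup
    · exact ⟨Fintype.card V, fun n hn => by
        obtain ⟨a', b', q', hq', _, _, rfl⟩ := hn
        exact (hq'.1.length_lt).le⟩
    · exact ⟨a, b, q, hq, ha, hb, rfl⟩
  have hc1 : PMT.c1 G + 1 ≤ c := hcT ▸ le_max_left _ _
  have hc2 : PMT.c2 G + 2 ≤ c := hcT ▸ le_max_right _ _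
  -- shortest path from r to t
  obtain ⟨w0, hw0⟩ := hconn.exists_walk_length_eq_dist r t
  set d := G.dist r t with hddef
  set p := w0.bypass with hpdef
  have hp : p.IsPath := w0.bypass_isPath
  have hpl : p.length = d :=
    le_antisymm (le_trans w0.length_bypass_le hw0.le) (SimpleGraph.dist_le _)
  have hd1 : 1 ≤ d := hconn.pos_dist_of_ne hrt
  have hdD : d ≤ G.diam := by
    apply SimpleGraph.dist_le_diam
    have : Nonempty V := ⟨r⟩
    obtain ⟨u, v, huv⟩ := SimpleGraph.exists_edist_eq_ediam_of_finite (G := G)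
    rw [← huv]
    exact SimpleGraph.edist_ne_top_iff_reachable.2 (hconn u v)
  set v := p.getVert with hvdef
  have hinj : ∀ i ≤ d, ∀ j ≤ d, v i = v j → i = j := by
    intro i hi j hj hij
    exact CatAux.getVert_injOn' hp i (by omega) j (by omega) hij
  -- internal vertices have degree ≥ 2
  have hideg : ∀ i, 1 ≤ i → i + 1 ≤ d → 2 ≤ PMT.deg G (v i) := by
    intro i h1 h2
    have ha1 : G.Adj (v (i-1)) (v i) := by
      have := p.adj_getVert_succ (i := i - 1) (by omega)
      have he : i - 1 + 1 = i := by omega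
      rwa [he] at this
    have ha2 : G.Adj (v i) (v (i+1)) := p.adj_getVert_succ (by omega)
    have hsub : ({v (i-1), v (i+1)} : Set V) ⊆ G.neighborSet (v i) := by
      intro z hz
      rcases hz with rfl | hz
      · exact ha1.symm
      · rw [Set.mem_singleton_iff] at hz
        subst hz; exact ha2
    have hne : v (i-1) ≠ v (i+1) := by
      intro h
      have := hinj (i-1) (by omega) (i+1) (by omega) h
      omega
    calc 2 = ({v (i-1), v (i+1)} : Set V).ncard := (Set.ncard_pair hne).symm
    _ ≤ (G.neighborSet (v i)).ncard := Set.ncard_le_ncard hsub (Set.toFinite _)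
  -- junction in every window
  have hJex : ∀ x, x + c < d → ∃ i, x + 2 ≤ i ∧ i ≤ x + c ∧ 2 < PMT.deg G (v i) := by
    intro x hx
    by_contra hcon
    push_neg at hcon
    have hall : ∀ i, x + 2 ≤ i → i ≤ x + c → PMT.deg G (v i) = 2 := by
      intro i h1 h2
      have := hcon i h1 h2
      have := hideg i (by omega) (by omega)
      omega
    obtain ⟨q, hq, hql, hqs, hqs2⟩ := CatAux.seg hp (x+1) (x+c+1) (by omega) (by omega)
    have hint : ∀ z ∈ q.support, z ≠ v (x+1) → z ≠ v (x+c+1) → PMT.deg G z = 2 := by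
      intro z hz hz1 hz2
      obtain ⟨k, hk1, hk2, rfl⟩ := hqs z hz
      have hk1' : k ≠ x + 1 := fun h => hz1 (by rw [h])
      have hk2' : k ≠ x + c + 1 := fun h => hz2 (by rw [h])
      exact hall k (by omega) (by omega)
    obtain ⟨a, b, q', hq', hlq⟩ := CatAux.corridor_extend hT.IsAcyclic (Fintype.card V)
      _ _ q hq (by omega) hint (by omega)
    have := hcorr1 q' hq'
    omega
  -- the greedy junction choice
  set QS : ℕ → Set ℕ := fun x => {i | i ≤ x + c ∧ 2 < PMT.deg G (v i)} with hQSdef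
  set Q : ℕ → ℕ := fun x => sSup (QS x) with hQdef
  have hQbdd : ∀ x, BddAbove (QS x) := fun x => ⟨x + c, fun i hi => hi.1⟩
  have hQ : ∀ x, x + c < d → x + 2 ≤ Q x ∧ Q x ≤ x + c ∧ 2 < PMT.deg G (v (Q x)) := by
    intro x hx
    obtain ⟨i, hi1, hi2, hi3⟩ := hJex x hx
    have hne : (QS x).Nonempty := ⟨i, hi2, hi3⟩
    have hmem : Q x ∈ QS x := Nat.sSup_mem hne (hQbdd x)
    have hge : i ≤ Q x := le_csSup (hQbdd x) ⟨hi2, hi3⟩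
    exact ⟨by omega, hmem.1, hmem.2⟩
  -- the sequence of window starts
  set a : ℕ → ℕ := fun k => Nat.rec 0 (fun _ ak => if ak + c < d then Q ak - 1 else ak) k
    with hadef
  have ha0 : a 0 = 0 := rfl
  have haS : ∀ k, a (k+1) = if a k + c < d then Q (a k) - 1 else a k := fun k => rfl
  have hex : ∃ k, d ≤ a k + c := by
    by_contra hno
    push_neg at hno
    have hgrow : ∀ k, k ≤ a k := by
      intro k
      induction k with
      | zero => omega
      | succ k ihk =>
        have h := hno k
        have hq := hQ (a k) h
        rw [haS, if_pos h]
        omega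
    have := hno d
    have := hgrow d
    omega
  set m := Nat.find hex with hmdef
  have hm : d ≤ a m + c := Nat.find_spec hex
  have hmin : ∀ k, k < m → a k + c < d := by
    intro k hk
    have := Nat.find_min hex hk
    omega
  have hstep : ∀ k, k < m → a (k+1) = Q (a k) - 1 := by
    intro k hk
    rw [haS, if_pos (hmin k hk)]
  have hQk : ∀ k, k < m → a k + 2 ≤ Q (a k) ∧ Q (a k) ≤ a k + c ∧
      2 < PMT.deg G (v (Q (a k))) := fun k hk => hQ (a k) (hmin k hk)
  have hlt : ∀ k, k < m → a k + 1 ≤ a (k+1) := by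
    intro k hk
    have := hQk k hk
    rw [hstep k hk]
    omega
  have ham1 : a m + 1 ≤ d := by
    rcases Nat.eq_zero_or_pos m with h0 | h0
    · have h1 : a m = a 0 := by rw [h0]
      rw [h1, ha0]; omega
    · have hk : m - 1 < m := by omega
      have h1 : a m = a ((m-1)+1) := congrArg a (show m = (m-1)+1 by omega)
      have hA := hQk (m-1) hk
      have hB := hmin (m-1) hk
      rw [h1, hstep (m-1) hk]
      omega
  have hale : ∀ k, k ≤ m → a k + 1 ≤ d := by
    intro k hk
    rcases eq_or_lt_of_le hk with rfl | hk
    · exact ham1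
    · have := hmin k hk
      omega
  -- definition of the caterpillar sets
  set S : ℕ → Finset V := fun k => (Finset.Icc (a k) (min (a k + c) d)).image v with hSdef
  have hSeq : ∀ k, S k = (Finset.Icc (a k) (min (a k + c) d)).image v := fun k => rfl
  have hSmem : ∀ k i, a k ≤ i → i ≤ a k + c → i ≤ d → v i ∈ S k := by
    intro k i h1 h2 h3
    rw [hSeq, Finset.mem_image]
    exact ⟨i, Finset.mem_Icc.2 ⟨h1, by omega⟩, rfl⟩
  refine ⟨m, S, ?_, ?_, ?_, ?_, ?_, ?_, ?_, ?_, ?_⟩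
  · -- connectivity
    intro k hk
    have hlo : a k ≤ min (a k + c) d := by
      have := hale k hk
      omega
    obtain ⟨q, hq, hql, hqs, hqs2⟩ := CatAux.seg hp (a k) (min (a k + c) d) hlo
      (by rw [hpl]; omega)
    have hset : (↑(S k) : Set V) = {z | z ∈ q.support} := by
      ext z
      rw [hSeq]
      simp only [Finset.coe_image, Set.mem_image, Finset.mem_coe,
        Finset.mem_Icc, Set.mem_setOf_eq]
      constructor
      · rintro ⟨i, ⟨hi1, hi2⟩, rfl⟩
        exact hqs2 i hi1 hi2
      · intro hz
        obtain ⟨i, h1, h2, rfl⟩ := hqs z hz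
        exact ⟨i, ⟨h1, h2⟩, rfl⟩
    rw [hset]
    exact q.connected_induce_support
  · -- cards of all but last
    intro k hk
    have hmn : min (a k + c) d = a k + c := by
      have := hmin k hk
      omega
    rw [hSeq, hmn]
    rw [Finset.card_image_of_injOn]
    · rw [Nat.card_Icc]; omega
    · intro i hi j hj hij
      simp only [Finset.coe_Icc, Set.mem_Icc] at hi hj
      have := hmin k hk
      exact hinj i (by omega) j (by omega) hij
  · -- card of last
    rw [hSeq]
    calc ((Finset.Icc (a m) (min (a m + c) d)).image v).card
        ≤ (Finset.Icc (a m) (min (a m + c) d)).card := Finset.card_image_le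
    _ ≤ c + 1 := by rw [Nat.card_Icc]; omega
  · -- r ∈ S 0
    rw [hSeq, Finset.mem_image]
    refine ⟨0, ?_, by rw [hvdef, Walk.getVert_zero]⟩
    rw [Finset.mem_Icc, ha0]
    omega
  · -- t ∈ S m
    rw [hSeq, Finset.mem_image]
    refine ⟨d, ?_, ?_⟩
    · rw [Finset.mem_Icc]
      constructor
      · omega
      · omega
    · rw [hvdef]
      have := p.getVert_of_length_le (i := d) (by omega)
      exact this
  · -- intersection cards
    intro k hk
    obtain ⟨hQa, hQb, hQc⟩ := hQk k hk
    have hstepk := hstep k hk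
    have hd' := hmin k hk
    have hmem1 : v ((Q (a k)) - 1) ∈ S k ∩ S (k+1) := by
      rw [Finset.mem_inter]
      exact ⟨hSmem k ((Q (a k))-1) (by omega) (by omega) (by omega),
        hSmem (k+1) ((Q (a k))-1) (by omega) (by omega) (by omega)⟩
    have hmem2 : v (Q (a k)) ∈ S k ∩ S (k+1) := by
      rw [Finset.mem_inter]
      exact ⟨hSmem k (Q (a k)) (by omega) (by omega) (by omega),
        hSmem (k+1) (Q (a k)) (by omega) (by omega) (by omega)⟩
    have hne : v ((Q (a k)) - 1) ≠ v (Q (a k)) := by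
      intro h
      have := hinj ((Q (a k)) - 1) (by omega) (Q (a k)) (by omega) h
      omega
    calc 2 = ({v ((Q (a k)) - 1), v (Q (a k))} : Finset V).card := (Finset.card_pair hne).symm
    _ ≤ (S k ∩ S (k+1)).card := by
        apply Finset.card_le_card
        intro z hz
        rw [Finset.mem_insert, Finset.mem_singleton] at hz
        rcases hz with rfl | rfl
        · exact hmem1
        · exact hmem2
  · -- junction in intersection
    intro k hk
    obtain ⟨hQa, hQb, hQc⟩ := hQk k hk
    have hstepk := hstep k hk
    have hd' := hmin k hk
    refine ⟨v (Q (a k)), ?_, hQc⟩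
    rw [Finset.mem_inter]
    exact ⟨hSmem k (Q (a k)) (by omega) (by omega) (by omega),
      hSmem (k+1) (Q (a k)) (by omega) (by omega) (by omega)⟩
  · -- union cards
    intro k hk
    obtain ⟨hQa, hQb, hQc⟩ := hQk k hk
    have hstepk := hstep k hk
    have hd' := hmin k hk
    have hsub : S k ∪ S (k+1) ⊆ (Finset.Icc (a k) (min ((Q (a k)) - 1 + c) d)).image v := by
      apply Finset.union_subset
      · rw [hSeq k]
        apply Finset.image_subset_image
        apply Finset.Icc_subset_Icc le_rfl
        omega
      · rw [hSeq (k+1)]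
        apply Finset.image_subset_image
        apply Finset.Icc_subset_Icc
        · omega
        · omega
    calc (S k ∪ S (k+1)).card ≤ ((Finset.Icc (a k) (min ((Q (a k)) - 1 + c) d)).image v).card :=
        Finset.card_le_card hsub
    _ ≤ (Finset.Icc (a k) (min ((Q (a k)) - 1 + c) d)).card := Finset.card_image_le
    _ ≤ 2 * c := by rw [Nat.card_Icc]; omega
  · -- the length bound
    -- two-step progress
    have htwo : ∀ k, k + 1 < m → a k + c ≤ a (k+1+1) := by
      intro k hk1
      have hk : k < m := by omega
      obtain ⟨hQa, hQb, hQc⟩ := hQk k hk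
      have hstepk := hstep k hk
      have hd1' := hmin k hk
      have hd2' := hmin (k+1) hk1
      rw [hstepk] at hd2'
      have hNex : ∃ i, Q (a k) < i ∧ i ≤ d ∧ 2 < PMT.deg G (v i) := by
        by_contra hcon
        push_neg at hcon
        obtain ⟨q, hq, hql, hqs, hqs2⟩ := CatAux.seg hp (Q (a k)) d (by omega) (by omega)
        have hint : ∀ z ∈ q.support, z ≠ v (Q (a k)) → z ≠ v d → PMT.deg G z = 2 := by
          intro z hz hz1 hz2
          obtain ⟨i, hi1, hi2, rfl⟩ := hqs z hz
          have hi1' : i ≠ Q (a k) := fun h => hz1 (by rw [h])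
          have hi2' : i ≠ d := fun h => hz2 (by rw [h])
          have h2le := hideg i (by omega) (by omega)
          have h3le := hcon i (by omega) (by omega)
          show PMT.deg G (v i) = 2
          omega
        obtain ⟨a', b', q', hq', hlq⟩ := CatAux.corridor_extend hT.IsAcyclic
          (Fintype.card V) _ _ q hq (by omega) hint (by omega)
        have := hcorr1 q' hq'
        omega
      obtain ⟨N, hNa, hNb, hNc, hNmin⟩ :
          ∃ N, Q (a k) < N ∧ N ≤ d ∧ 2 < PMT.deg G (v N) ∧
            ∀ i, Q (a k) < i → i ≤ d → 2 < PMT.deg G (v i) → N ≤ i := by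
        refine ⟨sInf {i | Q (a k) < i ∧ i ≤ d ∧ 2 < PMT.deg G (v i)}, ?_, ?_, ?_, ?_⟩
        · exact (Nat.sInf_mem hNex).1
        · exact (Nat.sInf_mem hNex).2.1
        · exact (Nat.sInf_mem hNex).2.2
        · exact fun i h1 h2 h3 => Nat.sInf_le ⟨h1, h2, h3⟩
      have hgap : N ≤ Q (a k) + (c - 2) := by
        obtain ⟨q, hq, hql, hqs, hqs2⟩ := CatAux.seg hp (Q (a k)) N (by omega) (by omega)
        have hcorr : PMT.IsCorridor G q := by
          refine ⟨hq, by omega, ?_, ?_, ?_⟩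
          · show PMT.deg G (v (Q (a k))) ≠ 2
            omega
          · show PMT.deg G (v N) ≠ 2
            omega
          intro z hz hz1 hz2
          obtain ⟨i, hi1, hi2, rfl⟩ := hqs z hz
          have hi1' : i ≠ Q (a k) := fun h => hz1 (by rw [h])
          have hi2' : i ≠ N := fun h => hz2 (by rw [h])
          have h2le := hideg i (by omega) (by omega)
          show PMT.deg G (v i) = 2
          by_contra hnot
          have h3 : 2 < PMT.deg G (v i) := by omega
          have := hNmin i (by omega) (by omega) h3
          omega
        have := hcorr2 q hcorr hQc hNc
        omega
      have hNbig : a k + c < N := by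
        by_contra hcon2
        push_neg at hcon2
        have : N ≤ Q (a k) := le_csSup (hQbdd (a k)) ⟨hcon2, hNc⟩
        omega
      have hQnext : N ≤ Q (a (k+1)) := le_csSup (hQbdd (a (k+1)))
        ⟨by rw [hstepk]; omega, hNc⟩
      have hfin := hstep (k+1) hk1
      omega
    -- now the numeric bound
    have hcge : (2 : ℕ) ≤ c := hc
    rcases le_or_gt m 1 with hm1 | hm1
    · have hcR : (2:ℝ) ≤ (c:ℝ) := by exact_mod_cast hcge
      have h0 : (0:ℝ) ≤ 2 * (G.diam : ℝ) / ((c : ℝ) - 1) := by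
        apply div_nonneg (by positivity)
        linarith
      have hmR : (m:ℝ) ≤ 1 := by exact_mod_cast hm1
      linarith
    · have haj : ∀ i, 2*i ≤ m - 1 → i * c ≤ a (2*i) := by
        intro i
        induction i with
        | zero => simp
        | succ i ihi =>
          intro hi
          have h1 : 2*i ≤ m - 1 := by omega
          have h2 := ihi h1
          have h3 : 2*i + 1 < m := by omega
          have h4 := htwo (2*i) h3
          have he : a (2*i+1+1) = a (2*(i+1)) := congrArg a (show 2*i+1+1 = 2*(i+1) by omega)
          rw [he] at h4
          calc (i+1) * c = i * c + c := by ring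
          _ ≤ a (2*i) + c := by omega
          _ ≤ a (2*(i+1)) := h4
      have hmono : ∀ l, l ≤ m → ∀ k, k ≤ l → a k ≤ a l := by
        intro l
        induction l with
        | zero =>
          intro _ k hk
          have hk0 : k = 0 := by omega
          rw [hk0]
        | succ l ihl =>
          intro hl k hk
          rcases eq_or_lt_of_le hk with rfl | hk'
          · exact le_rfl
          · have h1 := ihl (by omega) k (by omega)
            have h2 := hlt l (by omega)
            omega
      have hj1 : 2*((m-1)/2) ≤ m - 1 := by omega
      have hj2 := haj ((m-1)/2) hj1
      have hj3 : a (2*((m-1)/2)) ≤ a (m-1) := hmono (m-1) (by omega) (2*((m-1)/2)) hj1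
      have hj4 := hmin (m-1) (by omega)
      have hkey : ((m-1)/2) * c + c + 1 ≤ d := by omega
      have hnat : (2*((m-1)/2)+1) * (c-1) ≤ 2 * d := by
        have h1 : (2*((m-1)/2)+1) * (c-1) = 2*(((m-1)/2)*(c-1)) + (c-1) := by ring
        have h2 : ((m-1)/2)*(c-1) ≤ ((m-1)/2)*c := Nat.mul_le_mul_left _ (Nat.sub_le c 1)
        omega
      have hcR : (2:ℝ) ≤ (c:ℝ) := by exact_mod_cast hcge
      have hdR : (d:ℝ) ≤ (G.diam : ℝ) := by exact_mod_cast hdD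
      have hpos : (0:ℝ) < (c:ℝ) - 1 := by linarith
      have hnatR : (2*(((m-1)/2 : ℕ):ℝ)+1) * ((c:ℝ) - 1) ≤ 2 * (G.diam : ℝ) := by
        have h'' : (((2*((m-1)/2)+1) : ℕ) : ℝ) * (((c-1) : ℕ) : ℝ) ≤ 2*(d:ℝ) := by
          exact_mod_cast hnat
        rw [Nat.cast_sub (by omega : 1 ≤ c)] at h''
        push_cast at h''
        linarith
      have hm2j : m ≤ 2*((m-1)/2) + 2 := by omega
      have hmR : (m:ℝ) ≤ 2*(((m-1)/2 : ℕ):ℝ) + 2 := by exact_mod_cast hm2j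
      have hdiv : 2*(((m-1)/2 : ℕ):ℝ)+1 ≤ 2 * (G.diam : ℝ) / ((c:ℝ) - 1) := by
        rw [le_div_iff₀ hpos]
        linarith
      linarith
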